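/- For even n ≥ 2, j_{n-1}·j_{n+1} − (b/a)·j_n² = 2^{n-1}, where (j_n) is the bi-periodic Jacobsthal sequence. -/
import Mathlib


noncomputable def jj (a b : ℝ) : ℕ → ℝ
  | 0 => 0
  | 1 => 1
  | n + 2 => (if Even (n + 2) then a else b) * jj a b (n + 1) + 2 * jj a b n

lemma jj_even (a b : ℝ) (k : ℕ) :
    jj a b (2*k+2) = a * jj a b (2*k+1) + 2 * jj a b (2*k) := by
  rw [show 2*k+2 = (2*k)+2 from rfl, jj]
  simp [Nat.even_add, parity_simps]

lemma jj_odd (a b : ℝ) (k : ℕ) :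
    jj a b (2*k+3) = b * jj a b (2*k+2) + 2 * jj a b (2*k+1) := by
  rw [show 2*k+3 = (2*k+1)+2 from rfl, jj]
  simp [Nat.even_add, parity_simps]

lemma aux17 (a b : ℝ) (ha : a ≠ 0) (k : ℕ) :
    jj a b (2*k+1) * jj a b (2*k+3) - (b/a) * jj a b (2*k+2)^2 = 2^(2*k+1) := by
  induction k with
  | zero =>
      have e2 : jj a b 2 = a := by
        rw [show (2:ℕ) = 0+2 from rfl, jj]
        simp [show Even 2 from by decide, jj]
      have e3 : jj a b 3 = b*a+2 := by
        rw [show (3:ℕ) = 1+2 from rfl, jj]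
        simp [show ¬ Even 3 from by decide, e2, jj]
      norm_num [e2, e3, show jj a b 1 = 1 from rfl]
      field_simp
      ring
  | succ k ih =>
      have h2 := jj_even a b k
      have h3 := jj_odd a b k
      have h4 : jj a b (2*(k+1)+2) = a * jj a b (2*k+3) + 2 * jj a b (2*k+2) := by
        have := jj_even a b (k+1)
        rw [show 2*(k+1)+1 = 2*k+3 from by ring, show 2*(k+1) = 2*k+2 from by ring] at this
        exact this
      have h5 : jj a b (2*(k+1)+3) = b * jj a b (2*(k+1)+2) + 2 * jj a b (2*k+3) := by
        have := jj_odd a b (k+1)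
        rw [show 2*(k+1)+1 = 2*k+3 from by ring] at this
        exact this
      rw [show 2*(k+1)+1 = 2*k+3 from by ring] at *
      rw [h5, h4, h3]
      rw [h3] at ih
      field_simp at ih ⊢
      rw [show 2*k+3 = 2*k+1+2 from by ring, pow_succ, pow_succ]
      linear_combination (4:ℝ) * ih

theorem stmt17 (a b : ℝ) (ha : a ≠ 0) (hb : b ≠ 0) (n : ℕ) (hn : 2 ≤ n) (he : Even n) :
    jj a b (n - 1) * jj a b (n + 1) - (b / a) * jj a b n ^ 2 = 2 ^ (n - 1) := by
  obtain ⟨m, hm⟩ := he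
  have hm1 : 1 ≤ m := by omega
  obtain ⟨k, hk⟩ : ∃ k, m = k + 1 := ⟨m - 1, by omega⟩
  subst hk
  have hn' : n = 2*k+2 := by omega
  subst hn'
  have := aux17 a b ha k
  rw [show 2*k+2-1 = 2*k+1 from by omega, show 2*k+2+1 = 2*k+3 from by ring]
  exact this
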